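/- Let f(z) = ∑_{i=1}^{n} z_i log z_i be the negative entropy on the simplex Δ^n = {z ∈ ℝ^n : z_i > 0, ∑ z_i = 1}. Then f is 1-strongly convex on Δ^n with respect to the ℓ₁-norm: for all x, y ∈ Δ^n, f(x) ≥ f(y) + ⟨∇f(y), x - y⟩ + (1/2)‖x - y‖₁². -/

import Mathlib

open Real Set

private noncomputable def Gfun : ℝ → ℝ := fun t => Real.log t - 3/2*((t-1)*(t+5))/(t+2)^2

private noncomputable def Ffun : ℝ → ℝ := fun t => t * Real.log t - t + 1 - 3*(t-1)^2/(2*(t+2))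

private lemma hG : ∀ t ∈ Set.Ioi (0:ℝ), HasDerivAt Gfun (1/t - 27/(t+2)^3) t := by
  intro t ht
  simp only [Set.mem_Ioi] at ht
  have h2 : t + 2 ≠ 0 := by linarith
  have h1 : HasDerivAt Real.log (1/t) t := by
    simpa [one_div] using Real.hasDerivAt_log (ne_of_gt ht)
  have hnum : HasDerivAt (fun t : ℝ => 3/2*((t-1)*(t+5))) (3/2*((t+5)+(t-1))) t := by
    exact (((hasDerivAt_id t).sub_const 1).mul ((hasDerivAt_id t).add_const 5)).const_mul (3/2)
      |>.congr_deriv (by simp only [id_eq]; ring)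
  have hden : HasDerivAt (fun t : ℝ => (t+2)^2) (2*(t+2)) t := by
    simpa using ((hasDerivAt_id t).add_const 2).fun_pow 2
  have := h1.fun_sub (hnum.fun_div hden (pow_ne_zero _ h2))
  refine this.congr_deriv ?_
  field_simp
  ring

private lemma hF : ∀ t ∈ Set.Ioi (0:ℝ), HasDerivAt Ffun (Gfun t) t := by
  intro t ht
  simp only [Set.mem_Ioi] at ht
  have h2 : (2:ℝ)*(t+2) ≠ 0 := by positivity
  have h1 : HasDerivAt (fun t : ℝ => t * Real.log t) (Real.log t + 1) t := by
    have := (hasDerivAt_id t).fun_mul (Real.hasDerivAt_log (ne_of_gt ht))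
    refine this.congr_deriv ?_
    field_simp
    simp only [id_eq]; ring
  have hnum : HasDerivAt (fun t : ℝ => 3*(t-1)^2) (3*(2*(t-1))) t := by
    exact (((hasDerivAt_id t).sub_const 1).pow 2).const_mul 3 |>.congr_deriv
      (by simp only [id_eq]; ring)
  have hden : HasDerivAt (fun t : ℝ => 2*(t+2)) 2 t := by
    simpa using ((hasDerivAt_id t).add_const 2).const_mul 2
  have := ((h1.fun_sub (hasDerivAt_id t)).add_const 1).fun_sub (hnum.fun_div hden h2)
  refine this.congr_deriv ?_
  have h3 : t + 2 ≠ 0 := by linarith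
  simp only [Gfun]
  field_simp
  ring

private lemma Gmono : MonotoneOn Gfun (Set.Ioi (0:ℝ)) := by
  apply monotoneOn_of_deriv_nonneg (convex_Ioi 0)
  · exact fun t ht => (hG t ht).differentiableAt.continuousAt.continuousWithinAt
  · intro t ht
    rw [interior_Ioi] at ht
    exact (hG t ht).differentiableAt.differentiableWithinAt
  · intro t ht
    rw [interior_Ioi] at ht
    rw [(hG t ht).deriv]
    have h0 : (0:ℝ) < t := ht
    have h1 : 27 * t ≤ (t+2)^3 := by nlinarith [mul_nonneg (sq_nonneg (t-1)) (by linarith : (0:ℝ) ≤ t+8)]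
    have h2 : 27/(t+2)^3 ≤ 1/t := by
      rw [div_le_div_iff₀ (by positivity) h0]
      linarith
    linarith

private lemma G_one : Gfun 1 = 0 := by simp [Gfun]

private lemma key (t : ℝ) (ht : 0 < t) : 3*(t-1)^2/(2*(t+2)) ≤ t * Real.log t - t + 1 := by
  have hF1 : Ffun 1 = 0 := by simp [Ffun]
  have main : 0 ≤ Ffun t := by
    rcases le_total t 1 with h | h
    · have hanti : AntitoneOn Ffun (Set.Ioc (0:ℝ) 1) := by
        apply antitoneOn_of_deriv_nonpos (convex_Ioc 0 1)
        · intro s hs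
          exact (hF s (Set.mem_Ioi.2 hs.1)).differentiableAt.continuousAt.continuousWithinAt
        · intro s hs
          rw [interior_Ioc] at hs
          exact (hF s (Set.mem_Ioi.2 hs.1)).differentiableAt.differentiableWithinAt
        · intro s hs
          rw [interior_Ioc] at hs
          rw [(hF s (Set.mem_Ioi.2 hs.1)).deriv]
          have := Gmono (Set.mem_Ioi.2 hs.1) (Set.mem_Ioi.2 one_pos) hs.2.le
          rw [G_one] at this
          exact this
      have := hanti (Set.mem_Ioc.2 ⟨ht, h⟩) (Set.mem_Ioc.2 ⟨one_pos, le_refl 1⟩) h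
      rw [hF1] at this; exact this
    · have hmono : MonotoneOn Ffun (Set.Ici (1:ℝ)) := by
        apply monotoneOn_of_deriv_nonneg (convex_Ici 1)
        · intro s hs
          exact (hF s (Set.mem_Ioi.2 (by linarith [Set.mem_Ici.1 hs]))).differentiableAt.continuousAt.continuousWithinAt
        · intro s hs
          rw [interior_Ici] at hs
          have hs1 : (1:ℝ) < s := hs
          exact (hF s (Set.mem_Ioi.2 (by linarith))).differentiableAt.differentiableWithinAt
        · intro s hs
          rw [interior_Ici] at hs
          have hs1 : (1:ℝ) < s := hs
          rw [(hF s (Set.mem_Ioi.2 (by linarith))).deriv]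
          have := Gmono (Set.mem_Ioi.2 one_pos) (Set.mem_Ioi.2 (by linarith)) hs1.le
          rw [G_one] at this
          exact this
      have := hmono (Set.mem_Ici.2 (le_refl 1)) (Set.mem_Ici.2 h) h
      rw [hF1] at this; exact this
  simp only [Ffun] at main
  linarith

private lemma key2 (a b : ℝ) (ha : 0 < a) (hb : 0 < b) :
    (3/2)*((a-b)^2/(a+2*b)) ≤ a * Real.log a - a * Real.log b - a + b := by
  have h := key (a/b) (div_pos ha hb)
  rw [Real.log_div (ne_of_gt ha) (ne_of_gt hb)] at h
  have h2 := mul_le_mul_of_nonneg_left h hb.le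
  have e1 : b * (a/b * (Real.log a - Real.log b) - a/b + 1)
      = a * Real.log a - a * Real.log b - a + b := by
    field_simp
  have hab : a + 2*b ≠ 0 := by positivity
  have e2 : b * (3*(a/b-1)^2/(2*(a/b+2))) = (3/2)*((a-b)^2/(a+2*b)) := by
    field_simp
  rw [e1, e2] at h2
  exact h2

theorem stmt_14 (n : ℕ) (x y : Fin n → ℝ)
    (hx : ∀ i, 0 < x i) (hy : ∀ i, 0 < y i)
    (hxs : ∑ i, x i = 1) (hys : ∑ i, y i = 1) :
    ∑ i, x i * Real.log (x i) ≥ ∑ i, y i * Real.log (y i)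
      + ∑ i, (Real.log (y i) + 1) * (x i - y i)
      + (1/2) * (∑ i, |x i - y i|)^2 := by
  set S := ∑ i, |x i - y i| with hS
  -- reduce to KL ≥ S²/2
  have hred : ∑ i, y i * Real.log (y i) + ∑ i, (Real.log (y i) + 1) * (x i - y i)
      = ∑ i, x i * Real.log (y i) := by
    rw [← Finset.sum_add_distrib]
    have : ∀ i, y i * Real.log (y i) + (Real.log (y i) + 1) * (x i - y i)
        = x i * Real.log (y i) + (x i - y i) := by intro i; ring
    simp_rw [this, Finset.sum_add_distrib, Finset.sum_sub_distrib, hxs, hys]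
    ring
  rw [hred]
  -- pointwise bound summed
  have hterm : ∀ i ∈ Finset.univ, (3/2) * ((x i - y i)^2/(x i + 2*y i))
      ≤ x i * Real.log (x i) - x i * Real.log (y i) - x i + y i := by
    intro i _
    exact key2 (x i) (y i) (hx i) (hy i)
  have hsum := Finset.sum_le_sum hterm
  have hsplit : ∑ i, (x i * Real.log (x i) - x i * Real.log (y i) - x i + y i)
      = ∑ i, x i * Real.log (x i) - ∑ i, x i * Real.log (y i) := by
    simp_rw [Finset.sum_add_distrib, Finset.sum_sub_distrib, hxs, hys]
    ring
  rw [hsplit] at hsum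
  -- Cauchy-Schwarz (Titu)
  have hv : ∑ i, (x i + 2*y i) = 3 := by
    rw [Finset.sum_add_distrib, hxs, ← Finset.mul_sum, hys]; norm_num
  have htitu : S^2/3 ≤ ∑ i, (x i - y i)^2/(x i + 2*y i) := by
    have := Finset.sq_sum_div_le_sum_sq_div Finset.univ (fun i => |x i - y i|)
      (g := fun i => x i + 2*y i)
      (fun i _ => by show (0:ℝ) < x i + 2 * y i; linarith [hx i, hy i])
    simp_rw [sq_abs, hv] at this
    exact this
  have hconst : ∑ i, (3/2) * ((x i - y i)^2/(x i + 2*y i))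
      = (3/2) * ∑ i, (x i - y i)^2/(x i + 2*y i) := by
    rw [Finset.mul_sum]
  rw [hconst] at hsum
  nlinarith [htitu, hsum]
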